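/- Let L > 0. Let p be a positive, L-periodic, C² solution of (a_L(x) p')' + f(x/L, p) = 0 on ℝ, and let ψ be a positive, L-periodic, C² function satisfying the strict subsolution inequality (a_L(x) ψ')' + f(x/L, ψ) > 0 at every point of ℝ. Then p(x) ≥ ψ(x) for all x ∈ ℝ; in particular max_{x∈ℝ} p(x) ≥ max_{x∈ℝ} ψ(x). -/

import Mathlib

open MeasureTheory Filter Topology

lemma deriv2_nonneg_of_isLocalMin {w : ℝ → ℝ} (hw : ContDiff ℝ 2 w) {x₀ : ℝ}
    (h : IsLocalMin w x₀) : 0 ≤ deriv (deriv w) x₀ := by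
  by_contra hneg
  push_neg at hneg
  have hw1 : ContDiff ℝ 1 (deriv w) := ((contDiff_succ_iff_deriv (n := 1)).mp hw).2.2
  have hcont : Continuous (deriv (deriv w)) := ((contDiff_succ_iff_deriv (n := 0)).mp hw1).2.2.continuous
  have hopen : ∀ᶠ x in 𝓝 x₀, deriv (deriv w) x < 0 :=
    hcont.continuousAt.eventually_lt continuousAt_const hneg
  obtain ⟨δ, hδ, hball⟩ := Metric.eventually_nhds_iff.mp (hopen.and h)
  set ε := δ / 2 with hε
  have hεpos : 0 < ε := by positivity
  have hsub : Set.Icc x₀ (x₀ + ε) ⊆ Metric.ball x₀ δ := by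
    intro x hx
    simp only [Metric.mem_ball, Real.dist_eq, abs_lt]
    constructor <;> [nlinarith [hx.1]; nlinarith [hx.2]]
  have hanti : StrictAntiOn (deriv w) (Set.Icc x₀ (x₀ + ε)) := by
    apply strictAntiOn_of_deriv_neg (convex_Icc _ _) (hw1.continuous.continuousOn)
    intro x hx
    have : x ∈ Metric.ball x₀ δ := hsub (interior_subset hx)
    exact (hball this).1
  have hd0 : deriv w x₀ = 0 := h.deriv_eq_zero
  have hanti2 : StrictAntiOn w (Set.Icc x₀ (x₀ + ε)) := by
    apply strictAntiOn_of_deriv_neg (convex_Icc _ _) (hw.continuous.continuousOn)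
    intro x hx
    rw [interior_Icc] at hx
    have := hanti (Set.left_mem_Icc.mpr (by linarith [hx.2, hεpos])) (Set.mem_Icc.mpr ⟨hx.1.le, hx.2.le⟩) hx.1
    linarith [this]
  have h1 : w (x₀ + ε) < w x₀ := hanti2 (Set.left_mem_Icc.mpr (by linarith)) (Set.right_mem_Icc.mpr (by linarith)) (by linarith)
  have h2 : w x₀ ≤ w (x₀ + ε) := (hball (hsub (Set.right_mem_Icc.mpr (by linarith)))).2
  linarith

/-- If `p` is a positive `L`-periodic `C²` solution of
`(a_L p')' + f(x/L,p) = 0` and `ψ` is a positive `L`-periodic `C²` strict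
subsolution (`(a_L ψ')' + f(x/L,ψ) > 0` everywhere), then `p ≥ ψ` on `ℝ`;
in particular `max p ≥ max ψ`. -/
theorem stationary_state_dominates_subsolution
    (a : ℝ → ℝ) (f : ℝ → ℝ → ℝ) (α₁ α₂ L : ℝ) (p ψ : ℝ → ℝ)
    (ha_C2 : ContDiff ℝ 2 a) (ha_per : ∀ x, a (x + 1) = a x)
    (hα₁ : 0 < α₁) (hα₁₂ : α₁ < α₂)
    (ha_lb : ∀ x, α₁ ≤ a x) (ha_ub : ∀ x, a x ≤ α₂)
    (hf_per : ∀ x s, f (x + 1) s = f x s)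
    (hf_C1 : ContDiff ℝ 1 (fun q : ℝ × ℝ => f q.1 q.2))
    (hf_zero : ∀ x, f x 0 = 0)
    (hf_dec : ∀ x, StrictAntiOn (fun s => f x s / s) (Set.Ioi 0))
    (hL : 0 < L)
    (hp_C2 : ContDiff ℝ 2 p)
    (hp_pos : ∀ x, 0 < p x)
    (hp_per : ∀ x, p (x + L) = p x)
    (hp_eq : ∀ x, deriv (fun y => a (y / L) * deriv p y) x + f (x / L) (p x) = 0)
    (hψ_C2 : ContDiff ℝ 2 ψ)
    (hψ_pos : ∀ x, 0 < ψ x)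
    (hψ_per : ∀ x, ψ (x + L) = ψ x)
    (hψ_sub : ∀ x, 0 < deriv (fun y => a (y / L) * deriv ψ y) x + f (x / L) (ψ x)) :
    (∀ x, ψ x ≤ p x) ∧ sSup (Set.range ψ) ≤ sSup (Set.range p) := by
  -- The coefficient A
  set A : ℝ → ℝ := fun y => a (y / L) with hA_def
  have hA_C1 : ContDiff ℝ 1 A :=
    (ha_C2.of_le (by norm_num)).comp (contDiff_id.div_const L)
  have hp1 : ContDiff ℝ 1 (deriv p) := ((contDiff_succ_iff_deriv (n := 1)).mp hp_C2).2.2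
  have hψ1 : ContDiff ℝ 1 (deriv ψ) := ((contDiff_succ_iff_deriv (n := 1)).mp hψ_C2).2.2
  -- the ratio g = p/ψ and its minimum
  set g : ℝ → ℝ := fun x => p x / ψ x with hg_def
  have hg_cont : Continuous g :=
    hp_C2.continuous.div hψ_C2.continuous (fun x => (hψ_pos x).ne')
  have hg_per : Function.Periodic g L := fun x => by
    simp only [hg_def, hp_per, hψ_per]
  obtain ⟨x₀, hx₀mem, hx₀min⟩ :=
    (isCompact_Icc (a := (0:ℝ)) (b := L)).exists_isMinOn (Set.nonempty_Icc.mpr (by linarith)) hg_cont.continuousOn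
  set γ : ℝ := g x₀ with hγ_def
  have hγpos : 0 < γ := div_pos (hp_pos x₀) (hψ_pos x₀)
  have hkeyg : ∀ x, γ ≤ g x := by
    intro x
    obtain ⟨y, hy, hxy⟩ := hg_per.exists_mem_Ico₀ hL x
    rw [hxy]
    exact hx₀min (Set.mem_Icc.mpr ⟨hy.1, hy.2.le⟩)
  have hkey : ∀ x, γ * ψ x ≤ p x := by
    intro x
    have := hkeyg x
    rw [hg_def, le_div_iff₀ (hψ_pos x)] at this
    exact this
  have hmain : ∀ x, ψ x ≤ p x := by
    by_cases hγ1 : 1 ≤ γ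
    · intro x
      calc ψ x = 1 * ψ x := (one_mul _).symm
        _ ≤ γ * ψ x := by nlinarith [(hψ_pos x)]
        _ ≤ p x := hkey x
    · push_neg at hγ1
      exfalso
      -- contact: p x₀ = γ * ψ x₀
      have hcontact : p x₀ = γ * ψ x₀ := by
        have : γ = p x₀ / ψ x₀ := rfl
        rw [this, div_mul_cancel₀ _ (hψ_pos x₀).ne']
      set w : ℝ → ℝ := fun x => p x - γ * ψ x with hw_def
      have hw_C2 : ContDiff ℝ 2 w := hp_C2.sub (contDiff_const.mul hψ_C2)
      have hw_min : IsLocalMin w x₀ := by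
        apply Filter.Eventually.of_forall
        intro x
        simp only [hw_def]
        have h1 := hkey x
        linarith [hcontact]
      have hd0 : deriv w x₀ = 0 := hw_min.deriv_eq_zero
      have hd2 : 0 ≤ deriv (deriv w) x₀ := deriv2_nonneg_of_isLocalMin hw_C2 hw_min
      have hw1 : ContDiff ℝ 1 (deriv w) := ((contDiff_succ_iff_deriv (n := 1)).mp hw_C2).2.2
      -- derivative of w
      have hderiv_w : deriv w = fun y => deriv p y - γ * deriv ψ y := by
        funext y
        rw [hw_def]
        rw [deriv_fun_sub (hp_C2.differentiable (by norm_num) y) (((hψ_C2.differentiable (by norm_num)).const_mul γ) y)]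
        rw [deriv_const_mul _ (hψ_C2.differentiable (by norm_num) y)]
      -- D := (A w')'(x₀)
      have hAp : ContDiff ℝ 1 (fun y => A y * deriv p y) := hA_C1.mul hp1
      have hAψ : ContDiff ℝ 1 (fun y => A y * deriv ψ y) := hA_C1.mul hψ1
      have hfun_eq : (fun y => A y * deriv w y)
          = fun y => (A y * deriv p y) - γ * (A y * deriv ψ y) := by
        funext y
        rw [hderiv_w]
        ring
      have hD_split : deriv (fun y => A y * deriv w y) x₀
          = deriv (fun y => A y * deriv p y) x₀ - γ * deriv (fun y => A y * deriv ψ y) x₀ := by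
        rw [hfun_eq]
        rw [deriv_fun_sub (hAp.differentiable one_ne_zero x₀)
          (((hAψ.differentiable one_ne_zero).const_mul γ) x₀)]
        rw [deriv_const_mul _ (hAψ.differentiable one_ne_zero x₀)]
      have hD_prod : deriv (fun y => A y * deriv w y) x₀
          = deriv A x₀ * deriv w x₀ + A x₀ * deriv (deriv w) x₀ := by
        exact deriv_mul (hA_C1.differentiable one_ne_zero x₀) (hw1.differentiable one_ne_zero x₀)
      have hD_nonneg : 0 ≤ deriv (fun y => A y * deriv w y) x₀ := by
        rw [hD_prod, hd0]
        have hApos : 0 < A x₀ := lt_of_lt_of_le hα₁ (ha_lb _)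
        nlinarith
      -- the nonlinearity comparison
      have hs₂pos : 0 < ψ x₀ := hψ_pos x₀
      have hs₁pos : 0 < γ * ψ x₀ := mul_pos hγpos hs₂pos
      have hlt : γ * ψ x₀ < ψ x₀ := by nlinarith
      have hfrac := hf_dec (x₀ / L) (Set.mem_Ioi.mpr hs₁pos) (Set.mem_Ioi.mpr hs₂pos) hlt
      simp only at hfrac
      -- γ * f (x₀/L) (ψ x₀) < f (x₀/L) (γ * ψ x₀)
      have hfcomp : γ * f (x₀ / L) (ψ x₀) < f (x₀ / L) (γ * ψ x₀) := by
        have h1 : (γ * ψ x₀) * (f (x₀ / L) (ψ x₀) / ψ x₀)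
            < (γ * ψ x₀) * (f (x₀ / L) (γ * ψ x₀) / (γ * ψ x₀)) :=
          mul_lt_mul_of_pos_left hfrac hs₁pos
        rw [mul_div_cancel₀ _ hs₁pos.ne'] at h1
        calc γ * f (x₀ / L) (ψ x₀)
            = (γ * ψ x₀) * (f (x₀ / L) (ψ x₀) / ψ x₀) := by
              field_simp
          _ < f (x₀ / L) (γ * ψ x₀) := h1
      -- equations at x₀
      have hEp : deriv (fun y => A y * deriv p y) x₀ = -f (x₀ / L) (p x₀) := by
        have := hp_eq x₀; linarith
      have hEψ : -f (x₀ / L) (ψ x₀) < deriv (fun y => A y * deriv ψ y) x₀ := by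
        have := hψ_sub x₀; linarith
      have hEψ' : -(γ * f (x₀ / L) (ψ x₀)) < γ * deriv (fun y => A y * deriv ψ y) x₀ := by
        nlinarith
      rw [hD_split, hEp, hcontact] at hD_nonneg
      linarith
  refine ⟨hmain, ?_⟩
  -- sSup inequality
  have hbdd : BddAbove (Set.range p) := by
    have hsub : Set.range p ⊆ p '' (Set.Icc 0 L) := by
      rintro _ ⟨x, rfl⟩
      have hp_perF : Function.Periodic p L := hp_per
      obtain ⟨y, hy, hxy⟩ := hp_perF.exists_mem_Ico₀ hL x
      exact ⟨y, Set.mem_Icc.mpr ⟨hy.1, hy.2.le⟩, hxy.symm⟩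
    exact ((isCompact_Icc.image hp_C2.continuous).bddAbove).mono hsub
  apply csSup_le (Set.range_nonempty ψ)
  rintro _ ⟨x, rfl⟩
  exact le_trans (hmain x) (le_csSup hbdd ⟨x, rfl⟩)
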